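/- Let A ∈ ℝ^{m×n}, let Θ ∈ ℝ^{n×n} be diagonal with strictly positive diagonal entries, and let R_d ∈ ℝ^{m×m} be symmetric positive definite. Then every eigenvalue μ of the symmetric matrix M = [[−Θ^{-1}, Aᵀ],[A, R_d]] satisfies μ ≥ (1/2) ( (λ_min(R_d) − max_j (Θ^{-1})_{jj}) − [ (max_j (Θ^{-1})_{jj} + λ_min(R_d))² + 4 σ_max(A)² ]^{1/2} ). In particular this lower-bounds the most negative eigenvalue μ_{-n} of M. -/

import Mathlib

open Matrix

/-- Spectral norm (largest singular value) of a real matrix. -/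
noncomputable def specNorm {m n : ℕ} (A : Matrix (Fin m) (Fin n) ℝ) : ℝ :=
  Real.sqrt (⨆ i, (Matrix.isHermitian_mul_conjTranspose_self A).eigenvalues i)

lemma herm_shift_psd {k : ℕ} {B : Matrix (Fin k) (Fin k) ℝ} (hB : B.IsHermitian)
    {c : ℝ} (hc : ∀ i, c ≤ hB.eigenvalues i) :
    (B - c • (1 : Matrix (Fin k) (Fin k) ℝ)).PosSemidef := by
  set U : Matrix (Fin k) (Fin k) ℝ := (hB.eigenvectorUnitary : Matrix (Fin k) (Fin k) ℝ) with hU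
  have hUU : U * star U = 1 := Matrix.mem_unitaryGroup_iff.mp hB.eigenvectorUnitary.2
  have key : B - c • 1 = U * (Matrix.diagonal (fun i => hB.eigenvalues i - c)) * star U := by
    have hdiag : Matrix.diagonal (fun i => hB.eigenvalues i - c)
        = Matrix.diagonal (RCLike.ofReal ∘ hB.eigenvalues) - c • (1 : Matrix (Fin k) (Fin k) ℝ) := by
      ext i j
      by_cases h : i = j <;>
        simp [h, Matrix.diagonal_apply, Matrix.one_apply, Function.comp]
    rw [hdiag, Matrix.mul_sub, Matrix.sub_mul]
    conv_lhs => rw [hB.spectral_theorem]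
    rw [Unitary.conjStarAlgAut_apply]
    congr 1
    rw [Matrix.mul_smul, Matrix.smul_mul, mul_one, hUU]
  rw [key, Matrix.star_eq_conjTranspose]
  exact (Matrix.posSemidef_diagonal_iff.mpr
    fun i => sub_nonneg.mpr (hc i)).mul_mul_conjTranspose_same U

lemma herm_shift_psd' {k : ℕ} {B : Matrix (Fin k) (Fin k) ℝ} (hB : B.IsHermitian)
    {c : ℝ} (hc : ∀ i, hB.eigenvalues i ≤ c) :
    (c • (1 : Matrix (Fin k) (Fin k) ℝ) - B).PosSemidef := by
  set U : Matrix (Fin k) (Fin k) ℝ := (hB.eigenvectorUnitary : Matrix (Fin k) (Fin k) ℝ) with hU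
  have hUU : U * star U = 1 := Matrix.mem_unitaryGroup_iff.mp hB.eigenvectorUnitary.2
  have key : c • 1 - B = U * (Matrix.diagonal (fun i => c - hB.eigenvalues i)) * star U := by
    have hdiag : Matrix.diagonal (fun i => c - hB.eigenvalues i)
        = c • (1 : Matrix (Fin k) (Fin k) ℝ) - Matrix.diagonal (RCLike.ofReal ∘ hB.eigenvalues) := by
      ext i j
      by_cases h : i = j <;>
        simp [h, Matrix.diagonal_apply, Matrix.one_apply, Function.comp]
    rw [hdiag, Matrix.mul_sub, Matrix.sub_mul]
    conv_lhs => rw [hB.spectral_theorem]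
    rw [Unitary.conjStarAlgAut_apply]
    congr 1
    rw [Matrix.mul_smul, Matrix.smul_mul, mul_one, hUU]
  rw [key, Matrix.star_eq_conjTranspose]
  exact (Matrix.posSemidef_diagonal_iff.mpr
    fun i => sub_nonneg.mpr (hc i)).mul_mul_conjTranspose_same U

lemma rayleigh_lower {k : ℕ} {B : Matrix (Fin k) (Fin k) ℝ} (hB : B.IsHermitian)
    {c : ℝ} (hc : ∀ i, c ≤ hB.eigenvalues i) (v : Fin k → ℝ) :
    c * (v ⬝ᵥ v) ≤ v ⬝ᵥ B.mulVec v := by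
  have h := (herm_shift_psd hB hc).dotProduct_mulVec_nonneg v
  rw [Matrix.sub_mulVec, dotProduct_sub, Matrix.smul_mulVec, Matrix.one_mulVec,
    dotProduct_smul] at h
  simp only [star_trivial, smul_eq_mul] at h
  linarith

lemma rayleigh_upper {k : ℕ} {B : Matrix (Fin k) (Fin k) ℝ} (hB : B.IsHermitian)
    {c : ℝ} (hc : ∀ i, hB.eigenvalues i ≤ c) (v : Fin k → ℝ) :
    v ⬝ᵥ B.mulVec v ≤ c * (v ⬝ᵥ v) := by
  have h := (herm_shift_psd' hB hc).dotProduct_mulVec_nonneg v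
  rw [Matrix.sub_mulVec, dotProduct_sub, Matrix.smul_mulVec, Matrix.one_mulVec,
    dotProduct_smul] at h
  simp only [star_trivial, smul_eq_mul] at h
  linarith

set_option maxHeartbeats 1000000 in
/-- With `Θ` diagonal positive and `R_d` symmetric positive definite, every
eigenvalue `μ` of `M = [[−Θ⁻¹, Aᵀ],[A, R_d]]` satisfies
`μ ≥ ½((λ_min(R_d) − max_j (Θ⁻¹)_jj) − √((max_j (Θ⁻¹)_jj + λ_min(R_d))² + 4σ_max(A)²))`. -/
theorem stmt_10 {m n : ℕ} (A : Matrix (Fin m) (Fin n) ℝ)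
    (d : Fin n → ℝ) (hd : ∀ j, 0 < d j)
    (Rd : Matrix (Fin m) (Fin m) ℝ) (hRd : Rd.PosDef)
    (M : Matrix (Fin n ⊕ Fin m) (Fin n ⊕ Fin m) ℝ)
    (hMdef : M = Matrix.fromBlocks (-(Matrix.diagonal d)⁻¹) Aᵀ A Rd) :
    ∀ μ : ℝ, ∀ x : Fin n ⊕ Fin m → ℝ, x ≠ 0 → M.mulVec x = μ • x →
      (1 / 2) * (((⨅ i, hRd.1.eigenvalues i) - ⨆ j, (Matrix.diagonal d)⁻¹ j j) -
        Real.sqrt (((⨆ j, (Matrix.diagonal d)⁻¹ j j) + ⨅ i, hRd.1.eigenvalues i) ^ 2 +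
          4 * specNorm A ^ 2)) ≤ μ := by
  subst hMdef
  intro μ x hx hEig
  classical
  obtain ⟨u, v, rfl⟩ : ∃ u v, x = Sum.elim u v :=
    ⟨x ∘ Sum.inl, x ∘ Sum.inr, by funext p; cases p <;> rfl⟩
  set θ : ℝ := ⨆ j, (Matrix.diagonal d)⁻¹ j j with hθdef
  set lam : ℝ := ⨅ i, hRd.1.eigenvalues i with hlamdef
  set σ : ℝ := specNorm A with hσdef
  -- the inverse of the diagonal matrix
  have hdinv : (Matrix.diagonal d)⁻¹ = Matrix.diagonal (fun j => (d j)⁻¹) := by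
    apply Matrix.inv_eq_right_inv
    rw [Matrix.diagonal_mul_diagonal]
    ext i j
    by_cases h : i = j <;>
      simp [Matrix.diagonal_apply, Matrix.one_apply, h, mul_inv_cancel₀ (hd j).ne']
  have hθle : ∀ j, (d j)⁻¹ ≤ θ := by
    intro j
    have : (Matrix.diagonal d)⁻¹ j j = (d j)⁻¹ := by
      rw [hdinv, Matrix.diagonal_apply_eq]
    rw [hθdef, ← this]
    exact le_ciSup (f := fun j => (Matrix.diagonal d)⁻¹ j j)
      (Set.Finite.bddAbove (Set.finite_range _)) j
  -- quadratic form identity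
  have hQ : u ⬝ᵥ ((-(Matrix.diagonal d)⁻¹) *ᵥ u) + u ⬝ᵥ (Aᵀ *ᵥ v)
      + (v ⬝ᵥ (A *ᵥ u) + v ⬝ᵥ (Rd *ᵥ v)) = μ * (u ⬝ᵥ u + v ⬝ᵥ v) := by
    have h1 : Sum.elim u v ⬝ᵥ ((Matrix.fromBlocks (-(Matrix.diagonal d)⁻¹) Aᵀ A Rd)
        *ᵥ Sum.elim u v) = μ * (Sum.elim u v ⬝ᵥ Sum.elim u v) := by
      rw [hEig, dotProduct_smul, smul_eq_mul]
    rw [Matrix.fromBlocks_mulVec, sumElim_dotProduct_sumElim,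
      sumElim_dotProduct_sumElim, dotProduct_add, dotProduct_add] at h1
    exact h1
  -- positivity of the norm
  have hxx : 0 < u ⬝ᵥ u + v ⬝ᵥ v := by
    obtain ⟨p, hp⟩ := Function.ne_iff.mp hx
    rw [← sumElim_dotProduct_sumElim]
    exact Finset.sum_pos' (fun i _ => mul_self_nonneg _)
      ⟨p, Finset.mem_univ p, mul_self_pos.mpr hp⟩
  have huu : 0 ≤ u ⬝ᵥ u := Finset.sum_nonneg fun i _ => mul_self_nonneg _
  have hvv : 0 ≤ v ⬝ᵥ v := Finset.sum_nonneg fun i _ => mul_self_nonneg _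
  set a : ℝ := Real.sqrt (u ⬝ᵥ u) with hadef
  set b : ℝ := Real.sqrt (v ⬝ᵥ v) with hbdef
  have ha0 : 0 ≤ a := Real.sqrt_nonneg _
  have hb0 : 0 ≤ b := Real.sqrt_nonneg _
  have ha2 : a ^ 2 = u ⬝ᵥ u := Real.sq_sqrt huu
  have hb2 : b ^ 2 = v ⬝ᵥ v := Real.sq_sqrt hvv
  -- bound 1 : diagonal block
  have hbound1 : -θ * a ^ 2 ≤ u ⬝ᵥ ((-(Matrix.diagonal d)⁻¹) *ᵥ u) := by
    rw [hdinv, Matrix.neg_mulVec, dotProduct_neg, ha2]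
    have : u ⬝ᵥ (Matrix.diagonal (fun j => (d j)⁻¹) *ᵥ u)
        ≤ θ * (u ⬝ᵥ u) := by
      unfold dotProduct
      rw [Finset.mul_sum]
      apply Finset.sum_le_sum
      intro j _
      rw [Matrix.mulVec_diagonal]
      have h1 : (d j)⁻¹ * (u j * u j) ≤ θ * (u j * u j) :=
        mul_le_mul_of_nonneg_right (hθle j) (mul_self_nonneg _)
      nlinarith [h1]
    linarith
  -- bound 2 : Rd block
  have hlamle : ∀ i, lam ≤ hRd.1.eigenvalues i := fun i =>
    ciInf_le (Set.Finite.bddBelow (Set.finite_range _)) i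
  have hbound2 : lam * b ^ 2 ≤ v ⬝ᵥ (Rd *ᵥ v) := by
    rw [hb2]; exact rayleigh_lower hRd.1 hlamle v
  -- spectral norm facts
  have hSnn : 0 ≤ ⨆ i, (Matrix.isHermitian_mul_conjTranspose_self A).eigenvalues i := by
    rcases isEmpty_or_nonempty (Fin m) with h | h
    · simp
    · exact le_trans (Matrix.eigenvalues_self_mul_conjTranspose_nonneg A (Classical.arbitrary _))
        (le_ciSup (Set.Finite.bddAbove (Set.finite_range _)) (Classical.arbitrary _))
  have hσ0 : 0 ≤ σ := Real.sqrt_nonneg _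
  have hσ2 : σ ^ 2 = ⨆ i, (Matrix.isHermitian_mul_conjTranspose_self A).eigenvalues i := by
    rw [hσdef]; unfold specNorm; exact Real.sq_sqrt hSnn
  -- bound 3 : cross term
  have hcross : v ⬝ᵥ (A *ᵥ u) = u ⬝ᵥ (Aᵀ *ᵥ v) := by
    rw [Matrix.dotProduct_mulVec, Matrix.mulVec_transpose, dotProduct_comm]
  have hw : (Aᵀ *ᵥ v) ⬝ᵥ (Aᵀ *ᵥ v) ≤ σ ^ 2 * b ^ 2 := by
    have h1 : (Aᵀ *ᵥ v) ⬝ᵥ (Aᵀ *ᵥ v) = v ⬝ᵥ ((A * Aᵀ) *ᵥ v) := by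
      rw [Matrix.mulVec_transpose, ← Matrix.mulVec_mulVec, Matrix.mulVec_transpose,
        Matrix.dotProduct_mulVec]
    have h2 : ∀ i, (Matrix.isHermitian_mul_conjTranspose_self A).eigenvalues i
        ≤ σ ^ 2 := by
      intro i
      rw [hσ2]
      exact le_ciSup (Set.Finite.bddAbove (Set.finite_range _)) i
    have h3 := rayleigh_upper (Matrix.isHermitian_mul_conjTranspose_self A) h2 v
    have h4 : (A * Aᴴ : Matrix (Fin m) (Fin m) ℝ) = A * Aᵀ := by
      rw [Matrix.conjTranspose_eq_transpose_of_trivial]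
    rw [h1, hb2]
    rw [h4] at h3
    exact h3
  have hbound3 : -(σ * a * b) ≤ u ⬝ᵥ (Aᵀ *ᵥ v) := by
    have hcs : (u ⬝ᵥ (Aᵀ *ᵥ v)) ^ 2 ≤ (u ⬝ᵥ u) * ((Aᵀ *ᵥ v) ⬝ᵥ (Aᵀ *ᵥ v)) := by
      have := Finset.sum_mul_sq_le_sq_mul_sq Finset.univ u (Aᵀ *ᵥ v)
      unfold dotProduct
      calc (∑ j, u j * (Aᵀ *ᵥ v) j) ^ 2 ≤ (∑ j, u j ^ 2) * ∑ j, (Aᵀ *ᵥ v) j ^ 2 := this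
        _ = (∑ j, u j * u j) * ∑ j, (Aᵀ *ᵥ v) j * (Aᵀ *ᵥ v) j := by
            simp only [pow_two]
      
    have h5 : (u ⬝ᵥ (Aᵀ *ᵥ v)) ^ 2 ≤ (σ * a * b) ^ 2 := by
      calc (u ⬝ᵥ (Aᵀ *ᵥ v)) ^ 2 ≤ (u ⬝ᵥ u) * ((Aᵀ *ᵥ v) ⬝ᵥ (Aᵀ *ᵥ v)) := hcs
        _ ≤ (u ⬝ᵥ u) * (σ ^ 2 * b ^ 2) := mul_le_mul_of_nonneg_left hw huu
        _ = (σ * a * b) ^ 2 := by rw [← ha2]; ring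
    nlinarith [h5, mul_nonneg (mul_nonneg hσ0 ha0) hb0, sq_nonneg (u ⬝ᵥ (Aᵀ *ᵥ v) + σ * a * b)]
  -- combine
  rw [← ha2, ← hb2] at hQ
  have hmain : -θ * a ^ 2 - 2 * σ * a * b + lam * b ^ 2 ≤ μ * (a ^ 2 + b ^ 2) := by
    linarith [hQ, hbound1, hbound2, hbound3, hcross]
  -- the scalar inequality
  set r : ℝ := Real.sqrt ((θ + lam) ^ 2 + 4 * σ ^ 2) with hrdef
  have hr0 : 0 ≤ r := Real.sqrt_nonneg _
  have hr2 : r ^ 2 = (θ + lam) ^ 2 + 4 * σ ^ 2 := Real.sq_sqrt (by positivity)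
  have hp2 : 0 ≤ r - θ - lam := by
    have : |θ + lam| ≤ r := by
      rw [← Real.sqrt_sq_eq_abs, hrdef]
      apply Real.sqrt_le_sqrt
      nlinarith [sq_nonneg σ]
    have := neg_abs_le (θ + lam)
    have := le_abs_self (θ + lam)
    linarith
  have hq2 : 0 ≤ r + θ + lam := by
    have : |θ + lam| ≤ r := by
      rw [← Real.sqrt_sq_eq_abs, hrdef]
      apply Real.sqrt_le_sqrt
      nlinarith [sq_nonneg σ]
    have := neg_abs_le (θ + lam)
    linarith
  -- G := the quadratic form gap is nonneg
  set s : ℝ := Real.sqrt (r - θ - lam) with hsdef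
  set t : ℝ := Real.sqrt (r + θ + lam) with htdef
  have hs2 : s ^ 2 = r - θ - lam := Real.sq_sqrt hp2
  have ht2 : t ^ 2 = r + θ + lam := Real.sq_sqrt hq2
  have hst : s * t = 2 * σ := by
    rw [hsdef, htdef, ← Real.sqrt_mul hp2]
    have h9 : (r - θ - lam) * (r + θ + lam) = (2 * σ) ^ 2 := by linear_combination hr2
    rw [h9, Real.sqrt_sq (by linarith)]
  have hkey : (r - θ - lam) * a ^ 2 - 4 * σ * (a * b) + (r + θ + lam) * b ^ 2
      = (s * a - t * b) ^ 2 := by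
    have h8 : (s * a - t * b) ^ 2
        = s ^ 2 * a ^ 2 - 2 * (s * t) * (a * b) + t ^ 2 * b ^ 2 := by ring
    rw [h8, hs2, ht2, hst]; ring
  have hG : (1 / 2 : ℝ) * ((lam - θ) - r) * (a ^ 2 + b ^ 2)
      ≤ -θ * a ^ 2 - 2 * σ * a * b + lam * b ^ 2 := by
    nlinarith [sq_nonneg (s * a - t * b), hkey]
  have hfin : (1 / 2 : ℝ) * ((lam - θ) - r) * (a ^ 2 + b ^ 2) ≤ μ * (a ^ 2 + b ^ 2) :=
    le_trans hG hmain
  have hab : 0 < a ^ 2 + b ^ 2 := by rw [ha2, hb2]; exact hxx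
  exact le_of_mul_le_mul_right (by linarith [hfin]) hab
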